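/- Let t : Fin n → A × B with n ≥ 1 model a bag relation and let K be the number of distinct X-values of t. Then there exists a multiplicity function m : A × B → ℕ with m(a,b) ≤ c(a,b) for all (a,b), with at most one b having m(a,b) > 0 for each a, and with total size Σ_{(a,b)} m(a,b) = K. Consequently g₃(t), the maximum relative size of a subrelation of t satisfying the FD X→Y, satisfies g₃(t) ≥ K/n > 0. (Lower bound on g₃.) -/

import Mathlib

namespace AFD

open Finset

variable {A B : Type*}

/-- Number of indices with X-value `a`. -/
def c1 {n : ℕ} [DecidableEq A] (t : Fin n → A × B) (a : A) : ℕ :=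
  (Finset.univ.filter fun i => (t i).1 = a).card

/-- Number of indices with Y-value `b`. -/
def c2 {n : ℕ} [DecidableEq B] (t : Fin n → A × B) (b : B) : ℕ :=
  (Finset.univ.filter fun i => (t i).2 = b).card

/-- Number of indices with tuple value `(a, b)`. -/
def cnt {n : ℕ} [DecidableEq A] [DecidableEq B] (t : Fin n → A × B) (a : A) (b : B) : ℕ :=
  (Finset.univ.filter fun i => t i = (a, b)).card

/-- Marginal probability of X-value `a`. -/
noncomputable def p1 {n : ℕ} [DecidableEq A] (t : Fin n → A × B) (a : A) : ℝ :=
  (c1 t a : ℝ) / n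

/-- Marginal probability of Y-value `b`. -/
noncomputable def p2 {n : ℕ} [DecidableEq B] (t : Fin n → A × B) (b : B) : ℝ :=
  (c2 t b : ℝ) / n

/-- Joint probability of `(a, b)`. -/
noncomputable def pJ {n : ℕ} [DecidableEq A] [DecidableEq B] (t : Fin n → A × B)
    (a : A) (b : B) : ℝ :=
  (cnt t a b : ℝ) / n

/-- Conditional probability of Y-value `b` given X-value `a` (with the `0/0 = 0` convention,
which is automatic for real division in Lean). -/
noncomputable def pC {n : ℕ} [DecidableEq A] [DecidableEq B] (t : Fin n → A × B)
    (a : A) (b : B) : ℝ :=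
  pJ t a b / p1 t a

/-- The set of distinct X-values. -/
def domX {n : ℕ} [DecidableEq A] (t : Fin n → A × B) : Finset A :=
  Finset.univ.image fun i => (t i).1

/-- The set of distinct Y-values. -/
def domY {n : ℕ} [DecidableEq B] (t : Fin n → A × B) : Finset B :=
  Finset.univ.image fun i => (t i).2

/-- The set of distinct tuples. -/
def domXY {n : ℕ} [DecidableEq A] [DecidableEq B] (t : Fin n → A × B) : Finset (A × B) :=
  Finset.univ.image t

/-- The probabilistic dependency `pdep(X → Y)`. -/
noncomputable def pdep {n : ℕ} [DecidableEq A] [DecidableEq B] (t : Fin n → A × B) : ℝ :=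
  ∑ a ∈ domX t, p1 t a * ∑ b ∈ domY t, (pC t a b) ^ 2

/-- The probabilistic self-dependency `pdep(Y)`. -/
noncomputable def pdepY {n : ℕ} [DecidableEq B] (t : Fin n → A × B) : ℝ :=
  ∑ b ∈ domY t, (p2 t b) ^ 2

/-- The (X;Y)-permutation of `t` induced by the permutation `σ`. -/
def permRel {n : ℕ} (t : Fin n → A × B) (σ : Equiv.Perm (Fin n)) : Fin n → A × B :=
  fun i => ((t i).1, (t (σ i)).2)

/-- `t` satisfies the functional dependency X → Y. -/
def satFD {n : ℕ} (t : Fin n → A × B) : Prop :=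
  ∀ i j, (t i).1 = (t j).1 → (t i).2 = (t j).2

/-- The measure g₃: the maximum relative size of a subrelation of `t` satisfying
the FD X→Y, where subrelations are modeled by multiplicity functions `m ≤ c`. -/
noncomputable def g3 {n : ℕ} [DecidableEq A] [DecidableEq B] (t : Fin n → A × B) : ℝ :=
  sSup {s : ℝ | ∃ m : A × B → ℕ,
    (∀ a b, m (a, b) ≤ cnt t a b) ∧
    (∀ a b b', 0 < m (a, b) → 0 < m (a, b') → b = b') ∧
    s = ((∑ ab ∈ domXY t, m ab : ℕ) : ℝ) / n}

/-- Lower bound on g₃: there is a subrelation satisfying X→Y of size `K`, the number of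
distinct X-values, hence `g₃(t) ≥ K/n > 0`. -/
theorem g3_lower_bound {A B : Type*} [DecidableEq A] [DecidableEq B]
    {n : ℕ} (hn : 1 ≤ n) (t : Fin n → A × B) :
    (∃ m : A × B → ℕ,
      (∀ a b, m (a, b) ≤ cnt t a b) ∧
      (∀ a b b', 0 < m (a, b) → 0 < m (a, b') → b = b') ∧
      (∑ ab ∈ domXY t, m ab) = (domX t).card) ∧
    ((domX t).card : ℝ) / n ≤ g3 t ∧ 0 < ((domX t).card : ℝ) / n := by
  classical
  have hn0 : (0 : ℝ) < n := by exact_mod_cast hn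
  -- selection function
  let sel : A → B := fun a =>
    if h : ∃ i, (t i).1 = a then (t h.choose).2 else (t ⟨0, hn⟩).2
  have hsel : ∀ a, (∃ i, (t i).1 = a) → ∃ i, t i = (a, sel a) := by
    intro a h
    refine ⟨h.choose, ?_⟩
    have h1 := h.choose_spec
    simp only [sel, dif_pos h]
    exact Prod.ext h1 rfl
  let m : A × B → ℕ := fun ab =>
    if (∃ i, (t i).1 = ab.1) ∧ ab.2 = sel ab.1 then 1 else 0
  have hmle : ∀ a b, m (a, b) ≤ cnt t a b := by
    intro a b
    by_cases h : (∃ i, (t i).1 = a) ∧ b = sel a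
    · obtain ⟨i, hi⟩ := hsel a h.1
      have : m (a, b) = 1 := if_pos h
      rw [this, cnt]
      refine Finset.one_le_card.mpr ⟨i, ?_⟩
      simp [hi, h.2]
    · simp only [m, if_neg h]; exact Nat.zero_le _
  have hmuniq : ∀ a b b', 0 < m (a, b) → 0 < m (a, b') → b = b' := by
    intro a b b' hb hb'
    have h1 : (∃ i, (t i).1 = a) ∧ b = sel a := by
      by_contra h; simp only [m, if_neg h] at hb; exact absurd hb (lt_irrefl 0)
    have h2 : (∃ i, (t i).1 = a) ∧ b' = sel a := by
      by_contra h; simp only [m, if_neg h] at hb'; exact absurd hb' (lt_irrefl 0)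
    rw [h1.2, h2.2]
  -- the support set
  set S : Finset (A × B) := (domX t).image (fun a => (a, sel a)) with hS
  have hSsub : S ⊆ domXY t := by
    intro ab hab
    simp only [hS, Finset.mem_image] at hab
    obtain ⟨a, ha, rfl⟩ := hab
    have hex : ∃ i, (t i).1 = a := by
      simp only [domX, Finset.mem_image, Finset.mem_univ, true_and] at ha
      exact ha
    obtain ⟨i, hi⟩ := hsel a hex
    simp only [domXY, Finset.mem_image, Finset.mem_univ, true_and]
    exact ⟨i, hi⟩
  have hScard : S.card = (domX t).card := by
    rw [hS]
    exact Finset.card_image_of_injOn (fun a _ a' _ h => congrArg Prod.fst h)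
  have hmval : ∀ ab ∈ domXY t, m ab = if ab ∈ S then 1 else 0 := by
    intro ab hab
    by_cases h : ab ∈ S
    · simp only [if_pos h]
      simp only [hS, Finset.mem_image] at h
      obtain ⟨a, ha, rfl⟩ := h
      have hex : ∃ i, (t i).1 = a := by
        simp only [domX, Finset.mem_image, Finset.mem_univ, true_and] at ha
        exact ha
      exact if_pos ⟨hex, rfl⟩
    · simp only [if_neg h]
      refine if_neg ?_
      rintro ⟨hex, hb⟩
      apply h
      have ha : ab.1 ∈ domX t := by
        obtain ⟨i, hi⟩ := hex
        simp only [domX, Finset.mem_image, Finset.mem_univ, true_and]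
        exact ⟨i, hi⟩
      simp only [hS, Finset.mem_image]
      exact ⟨ab.1, ha, by rw [← hb]⟩
  have hsum : (∑ ab ∈ domXY t, m ab) = (domX t).card := by
    rw [Finset.sum_congr rfl hmval, Finset.sum_ite_mem, Finset.sum_const,
      smul_eq_mul, mul_one, Finset.inter_eq_right.mpr hSsub, hScard]
  refine ⟨⟨m, hmle, hmuniq, hsum⟩, ?_, ?_⟩
  · -- g3 lower bound
    have hmem : ((domX t).card : ℝ) / n ∈ {s : ℝ | ∃ m : A × B → ℕ,
        (∀ a b, m (a, b) ≤ cnt t a b) ∧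
        (∀ a b b', 0 < m (a, b) → 0 < m (a, b') → b = b') ∧
        s = ((∑ ab ∈ domXY t, m ab : ℕ) : ℝ) / n} :=
      ⟨m, hmle, hmuniq, by rw [hsum]⟩
    have hbdd : BddAbove {s : ℝ | ∃ m : A × B → ℕ,
        (∀ a b, m (a, b) ≤ cnt t a b) ∧
        (∀ a b b', 0 < m (a, b) → 0 < m (a, b') → b = b') ∧
        s = ((∑ ab ∈ domXY t, m ab : ℕ) : ℝ) / n} := by
      refine ⟨1, ?_⟩
      rintro s ⟨m', hle', _, rfl⟩
      have htot : (∑ ab ∈ domXY t, cnt t ab.1 ab.2) = n := by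
        have := Finset.card_eq_sum_card_fiberwise (f := t) (s := Finset.univ)
          (t := domXY t) (fun x _ => by
            simp only [Finset.mem_coe, domXY, Finset.mem_image, Finset.mem_univ, true_and]
            exact ⟨x, rfl⟩)
        simpa [cnt] using this.symm
      have hle2 : (∑ ab ∈ domXY t, m' ab) ≤ n := by
        exact le_trans (Finset.sum_le_sum fun ab _ => hle' ab.1 ab.2) (le_of_eq htot)
      rw [div_le_one hn0]
      exact_mod_cast hle2
    exact le_csSup hbdd hmem
  · -- positivity
    apply div_pos _ hn0
    have : (domX t).Nonempty := ⟨(t ⟨0, hn⟩).1, by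
      simp only [domX, Finset.mem_image, Finset.mem_univ, true_and]
      exact ⟨⟨0, hn⟩, rfl⟩⟩
    exact_mod_cast Finset.card_pos.mpr this

end AFD
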